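/- Let γ > 0, η > 0, and r₀ ∈ (0, γ/2). For any f ∈ L¹(ℝ³) ∩ L²(ℝ³) whose derivatives up to order k are in L², define (G₁₁ * f) on the Fourier side by multiplication with ĝ(ξ,t) = (λ₃e^{λ₄t} - λ₄e^{λ₃t})/(λ₃ - λ₄) where λ₃,λ₄ are the roots of λ² + γλ + |ξ|² = 0. Assuming the pointwise bounds |ĝ(ξ,t)| ≤ C·e^{-|ξ|²t/γ} for |ξ| < r₀ and |ĝ(ξ,t)| ≤ C·e^{-ηt} for |ξ| ≥ r₀, one has ‖∇^k(G₁₁ * f)(·,t)‖_{L²} ≤ C'·(1+t)^{-3/4 - k/2}·(‖f‖_{L¹} + ‖∇^k f‖_{L²}) for all t ≥ 0. -/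

import Mathlib

open Real MeasureTheory

local notation "E3" => EuclideanSpace ℝ (Fin 3)

lemma aux_sqrt_add_le {a b : ℝ} (ha : 0 ≤ a) (hb : 0 ≤ b) :
    Real.sqrt (a + b) ≤ Real.sqrt a + Real.sqrt b := by
  have h2 : (Real.sqrt a + Real.sqrt b) ^ 2 = a + b + 2 * (Real.sqrt a * Real.sqrt b) := by
    rw [add_sq, Real.sq_sqrt ha, Real.sq_sqrt hb]; ring
  calc Real.sqrt (a + b) ≤ Real.sqrt ((Real.sqrt a + Real.sqrt b) ^ 2) := by
        apply Real.sqrt_le_sqrt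
        nlinarith [Real.sqrt_nonneg a, Real.sqrt_nonneg b]
    _ = Real.sqrt a + Real.sqrt b := Real.sqrt_sq (by positivity)

lemma aux_int_gauss {b : ℝ} (hb : 0 < b) :
    Integrable (fun ξ : E3 => Real.exp (-b * ‖ξ‖ ^ 2)) := by
  have h := (GaussianFourier.integrable_cexp_neg_mul_sq_norm_add (b := (b:ℂ))
      (by simpa using hb) 0 (0 : E3)).norm
  simpa [Complex.norm_exp, ← Complex.ofReal_pow, Complex.ofReal_re] using h

lemma aux_cont (k : ℕ) (b : ℝ) :
    Continuous (fun ξ : E3 => ‖ξ‖ ^ (2 * k) * Real.exp (-b * ‖ξ‖ ^ 2)) := by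
  fun_prop

lemma aux_int_poly_gauss (k : ℕ) {b : ℝ} (hb : 0 < b) :
    Integrable (fun ξ : E3 => ‖ξ‖ ^ (2 * k) * Real.exp (-b * ‖ξ‖ ^ 2)) := by
  have h2 : (0:ℝ) < b / 2 := by linarith
  refine ((aux_int_gauss h2).const_mul ((k.factorial : ℝ) * (2 / b) ^ k)).mono'
    ((aux_cont k b).aestronglyMeasurable) ?_
  filter_upwards with ξ
  rw [Real.norm_eq_abs, abs_of_nonneg (by positivity)]
  have hx : (b / 2 * ‖ξ‖ ^ 2) ^ k / (k.factorial : ℝ) ≤ Real.exp (b / 2 * ‖ξ‖ ^ 2) :=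
    Real.pow_div_factorial_le_exp _ (by positivity) k
  have h3 : ‖ξ‖ ^ (2 * k) ≤ (k.factorial : ℝ) * (2 / b) ^ k * Real.exp (b / 2 * ‖ξ‖ ^ 2) := by
    have e1 : ‖ξ‖ ^ (2 * k)
        = (k.factorial : ℝ) * (2 / b) ^ k * ((b / 2 * ‖ξ‖ ^ 2) ^ k / (k.factorial : ℝ)) := by
      rw [mul_pow, pow_mul]
      have hfac : ((k.factorial : ℝ)) ≠ 0 := by positivity
      have hb0 : b ≠ 0 := hb.ne'
      field_simp
      rw [mul_assoc, ← mul_pow, div_mul_div_comm, mul_comm 2 b,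
        div_self (mul_ne_zero hb0 two_ne_zero), one_pow, mul_one]
    rw [e1]
    exact mul_le_mul_of_nonneg_left hx (by positivity)
  calc ‖ξ‖ ^ (2 * k) * Real.exp (-b * ‖ξ‖ ^ 2)
      ≤ ((k.factorial : ℝ) * (2 / b) ^ k * Real.exp (b / 2 * ‖ξ‖ ^ 2)) * Real.exp (-b * ‖ξ‖ ^ 2) :=
        mul_le_mul_of_nonneg_right h3 (Real.exp_nonneg _)
    _ = (k.factorial : ℝ) * (2 / b) ^ k * Real.exp (-(b / 2) * ‖ξ‖ ^ 2) := by
        rw [mul_assoc, ← Real.exp_add]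
        ring_nf

lemma aux_gauss_scale (k : ℕ) {b : ℝ} (hb : 0 < b) :
    (∫ ξ : E3, ‖ξ‖ ^ (2 * k) * Real.exp (-b * ‖ξ‖ ^ 2))
      = b ^ (-(3:ℝ)/2 - k) * ∫ ξ : E3, ‖ξ‖ ^ (2 * k) * Real.exp (-‖ξ‖ ^ 2) := by
  have hs : 0 < Real.sqrt b := Real.sqrt_pos.2 hb
  have hdim : Module.finrank ℝ E3 = 3 := by
    simp [finrank_euclideanSpace]
  have key := MeasureTheory.Measure.integral_comp_smul (μ := (volume : Measure E3))
      (f := fun ξ : E3 => ‖ξ‖ ^ (2*k) * Real.exp (-‖ξ‖^2)) (Real.sqrt b)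
  rw [hdim] at key
  have hlhs : (∫ ξ : E3, ‖Real.sqrt b • ξ‖ ^ (2*k) * Real.exp (-‖Real.sqrt b • ξ‖^2))
      = b ^ k * ∫ ξ : E3, ‖ξ‖ ^ (2 * k) * Real.exp (-b * ‖ξ‖ ^ 2) := by
    rw [← integral_const_mul]
    congr 1
    ext ξ
    rw [norm_smul, Real.norm_eq_abs, abs_of_nonneg hs.le]
    have h1 : (Real.sqrt b * ‖ξ‖)^(2*k) = b^k * ‖ξ‖^(2*k) := by
      rw [mul_pow, pow_mul, Real.sq_sqrt hb.le]
    have h2 : (Real.sqrt b * ‖ξ‖)^2 = b * ‖ξ‖^2 := by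
      rw [mul_pow, Real.sq_sqrt hb.le]
    rw [h1, h2]
    ring
  rw [hlhs] at key
  have habs : |((Real.sqrt b ^ 3)⁻¹ : ℝ)| = (Real.sqrt b ^ 3)⁻¹ := by
    rw [abs_of_nonneg]; positivity
  rw [habs, smul_eq_mul] at key
  have hsb : (Real.sqrt b ^ 3)⁻¹ = b ^ (-(3:ℝ)/2) := by
    rw [Real.sqrt_eq_rpow, ← Real.rpow_natCast (b ^ ((1:ℝ)/2)) 3, ← Real.rpow_mul hb.le,
      ← Real.rpow_neg hb.le]
    norm_num
  have hexp : b ^ (-(3:ℝ)/2 - k) = (Real.sqrt b ^ 3)⁻¹ * ((b:ℝ)^k)⁻¹ := by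
    rw [show (-(3:ℝ)/2 - k) = (-(3:ℝ)/2) + (-(k:ℝ)) by ring, Real.rpow_add hb, hsb,
      Real.rpow_neg hb.le, Real.rpow_natCast]
  have hbk0 : ((b:ℝ)^k) ≠ 0 := by positivity
  calc (∫ ξ : E3, ‖ξ‖ ^ (2*k) * Real.exp (-b * ‖ξ‖^2))
      = ((b:ℝ)^k)⁻¹ * (b^k * ∫ ξ : E3, ‖ξ‖ ^ (2*k) * Real.exp (-b * ‖ξ‖^2)) := by
        field_simp
    _ = ((b:ℝ)^k)⁻¹ * ((Real.sqrt b ^ 3)⁻¹ * ∫ ξ : E3, ‖ξ‖ ^ (2*k) * Real.exp (-‖ξ‖^2)) := by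
        rw [key]
    _ = b ^ (-(3:ℝ)/2 - k) * ∫ ξ : E3, ‖ξ‖ ^ (2*k) * Real.exp (-‖ξ‖^2) := by
        rw [hexp]; ring

set_option maxHeartbeats 1000000 in
theorem stmt12 (γ η r₀ Cg : ℝ) (k : ℕ) (hγ : 0 < γ) (hη : 0 < η)
    (hr₀ : 0 < r₀) (hr₀' : r₀ < γ / 2) (hCg : 0 < Cg) :
    ∃ C' > 0, ∀ (f : EuclideanSpace ℝ (Fin 3) → ℂ)
      (g : EuclideanSpace ℝ (Fin 3) → ℝ → ℂ),
      Integrable f →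
      Integrable (fun ξ : EuclideanSpace ℝ (Fin 3) =>
        ‖ξ‖ ^ (2 * k) * ‖VectorFourier.fourierIntegral Real.fourierChar volume (innerₗ (EuclideanSpace ℝ (Fin 3))) f ξ‖ ^ 2) →
      (∀ t : ℝ, 0 ≤ t → Measurable fun ξ => g ξ t) →
      (∀ t : ℝ, 0 ≤ t → ∀ ξ : EuclideanSpace ℝ (Fin 3), ‖ξ‖ < r₀ →
        ‖g ξ t‖ ≤ Cg * Real.exp (-‖ξ‖ ^ 2 * t / γ)) →
      (∀ t : ℝ, 0 ≤ t → ∀ ξ : EuclideanSpace ℝ (Fin 3), r₀ ≤ ‖ξ‖ →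
        ‖g ξ t‖ ≤ Cg * Real.exp (-η * t)) →
      ∀ t : ℝ, 0 ≤ t →
        (∫ ξ : EuclideanSpace ℝ (Fin 3),
            ‖ξ‖ ^ (2 * k) * ‖g ξ t‖ ^ 2 * ‖VectorFourier.fourierIntegral Real.fourierChar volume (innerₗ (EuclideanSpace ℝ (Fin 3))) f ξ‖ ^ 2) ^ ((1 : ℝ) / 2)
          ≤ C' * (1 + t) ^ (-(3 : ℝ) / 4 - (k : ℝ) / 2) *
            ((∫ x : EuclideanSpace ℝ (Fin 3), ‖f x‖) +
              (∫ ξ : EuclideanSpace ℝ (Fin 3),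
                ‖ξ‖ ^ (2 * k) * ‖VectorFourier.fourierIntegral Real.fourierChar volume (innerₗ (EuclideanSpace ℝ (Fin 3))) f ξ‖ ^ 2) ^ ((1 : ℝ) / 2)) := by
  set e : ℝ := -(3:ℝ)/2 - (k:ℝ) with he_def
  have he_neg : e ≤ 0 := by
    have : (0:ℝ) ≤ (k:ℝ) := Nat.cast_nonneg k
    rw [he_def]; linarith
  set I₁ : ℝ := ∫ ξ : E3, ‖ξ‖ ^ (2*k) * Real.exp (-‖ξ‖^2) with hI₁def
  have hI₁nn : 0 ≤ I₁ := integral_nonneg (fun ξ => by positivity)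
  set B : ℝ := (volume (Metric.ball (0:E3) r₀)).toReal with hBdef
  have hBnn : 0 ≤ B := ENNReal.toReal_nonneg
  set Kl : ℝ := r₀ ^ (2*k) * B * 2 ^ ((3:ℝ)/2 + (k:ℝ)) + γ ^ ((3:ℝ)/2 + (k:ℝ)) * I₁ with hKldef
  have hKlnn : 0 ≤ Kl := by positivity
  set Kh : ℝ := (1 + ((k:ℝ)+2)/(2*η)) ^ (k+2) with hKhdef
  have hKhnn : 0 ≤ Kh := by positivity
  have hKhpos : 0 < Kh := by positivity
  -- integrability on the ball
  have hball_int : ∀ b : ℝ, IntegrableOn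
      (fun ξ : E3 => ‖ξ‖ ^ (2*k) * Real.exp (-b * ‖ξ‖^2)) (Metric.ball (0:E3) r₀) := by
    intro b
    exact (((aux_cont k b).continuousOn).integrableOn_compact
      (isCompact_closedBall (0:E3) r₀)).mono_set Metric.ball_subset_closedBall
  -- low-frequency estimate
  have hKl : ∀ t : ℝ, 0 ≤ t →
      (∫ ξ in Metric.ball (0:E3) r₀, ‖ξ‖ ^ (2*k) * Real.exp (-(2*t/γ) * ‖ξ‖^2))
        ≤ Kl * (1+t) ^ e := by
    intro t ht
    have h1t : (0:ℝ) < 1 + t := by linarith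
    rcases le_or_gt t 1 with h1 | h1
    · -- small time
      have step1 : (∫ ξ in Metric.ball (0:E3) r₀, ‖ξ‖ ^ (2*k) * Real.exp (-(2*t/γ) * ‖ξ‖^2))
          ≤ ∫ _ξ in Metric.ball (0:E3) r₀, (r₀ ^ (2*k) : ℝ) := by
        apply setIntegral_mono_on (hball_int _)
          (integrableOn_const measure_ball_lt_top.ne)
          measurableSet_ball
        intro ξ hξ
        rw [Metric.mem_ball, dist_zero_right] at hξ
        have h2 : Real.exp (-(2*t/γ) * ‖ξ‖^2) ≤ 1 := by
          rw [Real.exp_le_one_iff]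
          have : 0 ≤ 2*t/γ := by positivity
          nlinarith [sq_nonneg ‖ξ‖]
        calc ‖ξ‖ ^ (2*k) * Real.exp (-(2*t/γ) * ‖ξ‖^2) ≤ ‖ξ‖ ^ (2*k) * 1 :=
              mul_le_mul_of_nonneg_left h2 (by positivity)
          _ ≤ r₀ ^ (2*k) := by
              rw [mul_one]
              exact pow_le_pow_left₀ (norm_nonneg _) hξ.le _
      have step2 : (∫ _ξ in Metric.ball (0:E3) r₀, (r₀ ^ (2*k) : ℝ)) = B * r₀ ^ (2*k) := by
        rw [setIntegral_const, smul_eq_mul, Measure.real_def]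
      have step3 : (2:ℝ) ^ e ≤ (1+t) ^ e :=
        Real.rpow_le_rpow_of_nonpos h1t (by linarith) he_neg
      have step4 : B * r₀ ^ (2*k) ≤ Kl * (1+t) ^ e := by
        have h2e : (2:ℝ) ^ ((3:ℝ)/2 + (k:ℝ)) * (2:ℝ) ^ e = 1 := by
          rw [← Real.rpow_add (by norm_num : (0:ℝ) < 2)]
          have h0 : (3:ℝ)/2 + (k:ℝ) + e = 0 := by rw [he_def]; ring
          rw [h0, Real.rpow_zero]
        have hKl1 : r₀ ^ (2*k) * B * 2 ^ ((3:ℝ)/2 + (k:ℝ)) ≤ Kl := by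
          rw [hKldef]
          nlinarith [mul_nonneg (Real.rpow_nonneg (le_of_lt hγ) ((3:ℝ)/2 + (k:ℝ))) hI₁nn]
        calc B * r₀ ^ (2*k)
            = (r₀ ^ (2*k) * B * 2 ^ ((3:ℝ)/2 + (k:ℝ))) * (2:ℝ) ^ e := by
              rw [mul_assoc, h2e]; ring
          _ ≤ Kl * (2:ℝ) ^ e :=
              mul_le_mul_of_nonneg_right hKl1 (Real.rpow_nonneg (by norm_num) e)
          _ ≤ Kl * (1+t) ^ e := mul_le_mul_of_nonneg_left step3 hKlnn
      rw [step2] at step1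
      exact step1.trans step4
    · -- large time
      have hb : (0:ℝ) < 2*t/γ := by positivity
      have step1 : (∫ ξ in Metric.ball (0:E3) r₀, ‖ξ‖ ^ (2*k) * Real.exp (-(2*t/γ) * ‖ξ‖^2))
          ≤ ∫ ξ : E3, ‖ξ‖ ^ (2*k) * Real.exp (-(2*t/γ) * ‖ξ‖^2) :=
        setIntegral_le_integral (aux_int_poly_gauss k hb)
          (Filter.Eventually.of_forall (fun ξ => by positivity))
      have step2 : (∫ ξ : E3, ‖ξ‖ ^ (2*k) * Real.exp (-(2*t/γ) * ‖ξ‖^2))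
          = (2*t/γ) ^ e * I₁ := by
        rw [aux_gauss_scale k hb, hI₁def, he_def]
      have step3 : (2*t/γ) ^ e ≤ γ ^ ((3:ℝ)/2 + (k:ℝ)) * (1+t) ^ e := by
        have hbase : (0:ℝ) < (1+t)/γ := by positivity
        have hle : (1+t)/γ ≤ 2*t/γ := by
          gcongr <;> linarith
        have h5 : (2*t/γ) ^ e ≤ ((1+t)/γ) ^ e :=
          Real.rpow_le_rpow_of_nonpos hbase hle he_neg
        have h6 : ((1+t)/γ) ^ e = (1+t) ^ e * γ ^ ((3:ℝ)/2 + (k:ℝ)) := by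
          rw [Real.div_rpow (by linarith) hγ.le, div_eq_mul_inv, ← Real.rpow_neg hγ.le]
          congr 1
          rw [he_def]; ring
        rw [h6] at h5
        linarith [h5]
      calc (∫ ξ in Metric.ball (0:E3) r₀, ‖ξ‖ ^ (2*k) * Real.exp (-(2*t/γ) * ‖ξ‖^2))
          ≤ (2*t/γ) ^ e * I₁ := by rw [← step2]; exact step1
        _ ≤ (γ ^ ((3:ℝ)/2 + (k:ℝ)) * (1+t) ^ e) * I₁ :=
            mul_le_mul_of_nonneg_right step3 hI₁nn
        _ ≤ Kl * (1+t) ^ e := by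
            rw [hKldef]
            have h7 : (0:ℝ) ≤ (1+t) ^ e := Real.rpow_nonneg h1t.le e
            have h8 : (0:ℝ) ≤ r₀ ^ (2*k) * B * 2 ^ ((3:ℝ)/2 + (k:ℝ)) := by positivity
            nlinarith [mul_nonneg h8 h7]
  -- high-frequency time decay
  have hKh : ∀ t : ℝ, 0 ≤ t → Real.exp (-(2*η)*t) ≤ Kh * (1+t) ^ e := by
    intro t ht
    have h1t : (0:ℝ) < 1 + t := by linarith
    have hn : (0:ℝ) < (k:ℝ) + 2 := by positivity
    have hx : (0:ℝ) ≤ 2*η*t/((k:ℝ)+2) := by positivity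
    have hstep2 : 1 + t ≤ (1 + ((k:ℝ)+2)/(2*η)) * Real.exp (2*η*t/((k:ℝ)+2)) := by
      have he1 : (1:ℝ) ≤ Real.exp (2*η*t/((k:ℝ)+2)) := Real.one_le_exp hx
      have he2 : 2*η*t/((k:ℝ)+2) ≤ Real.exp (2*η*t/((k:ℝ)+2)) := by
        have := Real.add_one_le_exp (2*η*t/((k:ℝ)+2)); linarith
      have ht' : t ≤ ((k:ℝ)+2)/(2*η) * Real.exp (2*η*t/((k:ℝ)+2)) := by
        have hc : (0:ℝ) < ((k:ℝ)+2)/(2*η) := by positivity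
        have := mul_le_mul_of_nonneg_left he2 hc.le
        calc t = ((k:ℝ)+2)/(2*η) * (2*η*t/((k:ℝ)+2)) := by
              field_simp
          _ ≤ ((k:ℝ)+2)/(2*η) * Real.exp (2*η*t/((k:ℝ)+2)) := this
      nlinarith [he1]
    have hstep3 : (1+t)^(k+2) ≤ Kh * Real.exp (2*η*t) := by
      calc (1+t)^(k+2) ≤ ((1 + ((k:ℝ)+2)/(2*η)) * Real.exp (2*η*t/((k:ℝ)+2)))^(k+2) :=
          pow_le_pow_left₀ (by linarith) hstep2 _
        _ = Kh * (Real.exp (2*η*t/((k:ℝ)+2)))^(k+2) := by rw [mul_pow, hKhdef]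
        _ = Kh * Real.exp (2*η*t) := by
            rw [← Real.exp_nat_mul]
            congr 1
            push_cast
            field_simp
    have hrp : (1+t) ^ ((3:ℝ)/2 + (k:ℝ)) ≤ (1+t:ℝ)^(k+2) := by
      rw [← Real.rpow_natCast (1+t) (k+2)]
      apply Real.rpow_le_rpow_of_exponent_le (by linarith)
      push_cast; linarith
    have hpos : (0:ℝ) < (1+t) ^ ((3:ℝ)/2 + (k:ℝ)) := Real.rpow_pos_of_pos h1t _
    have hfinal : (1+t) ^ ((3:ℝ)/2 + (k:ℝ)) ≤ Kh * Real.exp (2*η*t) := hrp.trans hstep3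
    have hinv : (1+t) ^ e = ((1+t) ^ ((3:ℝ)/2 + (k:ℝ)))⁻¹ := by
      rw [← Real.rpow_neg h1t.le]
      congr 1
      rw [he_def]; ring
    have hexp' : Real.exp (-(2*η)*t) = (Real.exp (2*η*t))⁻¹ := by
      rw [← Real.exp_neg]; ring_nf
    have h5 : (Kh * Real.exp (2*η*t))⁻¹ ≤ ((1+t) ^ ((3:ℝ)/2 + (k:ℝ)))⁻¹ :=
      inv_anti₀ hpos hfinal
    rw [hexp', hinv]
    calc (Real.exp (2*η*t))⁻¹ = Kh * (Kh * Real.exp (2*η*t))⁻¹ := by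
          rw [mul_inv]
          rw [← mul_assoc, mul_inv_cancel₀ hKhpos.ne', one_mul]
      _ ≤ Kh * ((1+t) ^ ((3:ℝ)/2 + (k:ℝ)))⁻¹ := mul_le_mul_of_nonneg_left h5 hKhnn
  -- main argument
  refine ⟨Cg * (Real.sqrt Kl + Real.sqrt Kh + 1), by positivity, ?_⟩
  intro f g hfint hfk hmeas hlow hhigh t ht
  have h1t : (0:ℝ) < 1 + t := by linarith
  set M : ℝ := ∫ x : E3, ‖f x‖ with hMdef
  have hMnn : 0 ≤ M := integral_nonneg fun x => norm_nonneg _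
  set N : ℝ := ∫ ξ : E3, ‖ξ‖^(2*k) * ‖VectorFourier.fourierIntegral Real.fourierChar volume (innerₗ (EuclideanSpace ℝ (Fin 3))) f ξ‖^2 with hNdef
  have hNnn : 0 ≤ N := integral_nonneg fun ξ => by positivity
  have hfhat : ∀ ξ : E3, ‖VectorFourier.fourierIntegral Real.fourierChar volume (innerₗ (EuclideanSpace ℝ (Fin 3))) f ξ‖ ≤ M := fun ξ =>
    VectorFourier.norm_fourierIntegral_le_integral_norm _ _ _ _ _
  set h₁ : E3 → ℝ := (Metric.ball (0:E3) r₀).indicator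
    (fun ξ => Cg^2 * M^2 * (‖ξ‖^(2*k) * Real.exp (-(2*t/γ) * ‖ξ‖^2))) with hh₁def
  set h₂ : E3 → ℝ := fun ξ =>
    (Cg^2 * Real.exp (-(2*η)*t)) * (‖ξ‖^(2*k) * ‖VectorFourier.fourierIntegral Real.fourierChar volume (innerₗ (EuclideanSpace ℝ (Fin 3))) f ξ‖^2) with hh₂def
  have hint1 : Integrable h₁ := by
    rw [hh₁def]
    exact MeasureTheory.IntegrableOn.integrable_indicator
      ((hball_int (2*t/γ)).const_mul _) measurableSet_ball
  have hint2 : Integrable h₂ := hfk.const_mul _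
  have hpoint : ∀ ξ : E3,
      ‖ξ‖^(2*k) * ‖g ξ t‖^2 * ‖VectorFourier.fourierIntegral Real.fourierChar volume (innerₗ (EuclideanSpace ℝ (Fin 3))) f ξ‖^2 ≤ h₁ ξ + h₂ ξ := by
    intro ξ
    by_cases hξ : ξ ∈ Metric.ball (0:E3) r₀
    · have hξ' : ‖ξ‖ < r₀ := by rwa [Metric.mem_ball, dist_zero_right] at hξ
      have hg2 : ‖g ξ t‖^2 ≤ Cg^2 * Real.exp (-(2*t/γ) * ‖ξ‖^2) := by
        have hb := hlow t ht ξ hξ'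
        have h0 : (0:ℝ) ≤ ‖g ξ t‖ := norm_nonneg _
        have hsq := mul_le_mul hb hb h0 (by positivity)
        calc ‖g ξ t‖^2 = ‖g ξ t‖ * ‖g ξ t‖ := sq (‖g ξ t‖)
          _ ≤ (Cg * Real.exp (-‖ξ‖^2*t/γ)) * (Cg * Real.exp (-‖ξ‖^2*t/γ)) := hsq
          _ = Cg^2 * Real.exp (-(2*t/γ) * ‖ξ‖^2) := by
              rw [show (Cg * Real.exp (-‖ξ‖^2*t/γ)) * (Cg * Real.exp (-‖ξ‖^2*t/γ))
                  = Cg^2 * (Real.exp (-‖ξ‖^2*t/γ) * Real.exp (-‖ξ‖^2*t/γ)) by ring,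
                ← Real.exp_add]
              congr 1
              ring
      have hf2 : ‖VectorFourier.fourierIntegral Real.fourierChar volume (innerₗ (EuclideanSpace ℝ (Fin 3))) f ξ‖^2 ≤ M^2 :=
        pow_le_pow_left₀ (norm_nonneg _) (hfhat ξ) 2
      have hh₁ : h₁ ξ = Cg^2*M^2*(‖ξ‖^(2*k) * Real.exp (-(2*t/γ)*‖ξ‖^2)) := by
        rw [hh₁def]; exact Set.indicator_of_mem hξ _
      have hh₂nn : 0 ≤ h₂ ξ := by rw [hh₂def]; positivity
      have hmain : ‖ξ‖^(2*k) * ‖g ξ t‖^2 * ‖VectorFourier.fourierIntegral Real.fourierChar volume (innerₗ (EuclideanSpace ℝ (Fin 3))) f ξ‖^2 ≤ h₁ ξ := by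
        rw [hh₁]
        have h9 := mul_le_mul (mul_le_mul_of_nonneg_left hg2
          (by positivity : (0:ℝ) ≤ ‖ξ‖^(2*k))) hf2 (by positivity) (by positivity)
        calc ‖ξ‖^(2*k) * ‖g ξ t‖^2 * ‖VectorFourier.fourierIntegral Real.fourierChar volume (innerₗ (EuclideanSpace ℝ (Fin 3))) f ξ‖^2
            ≤ ‖ξ‖^(2*k) * (Cg^2 * Real.exp (-(2*t/γ) * ‖ξ‖^2)) * M^2 := h9
          _ = Cg^2*M^2*(‖ξ‖^(2*k) * Real.exp (-(2*t/γ)*‖ξ‖^2)) := by ring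
      linarith
    · have hξ' : r₀ ≤ ‖ξ‖ := by
        rw [Metric.mem_ball, dist_zero_right, not_lt] at hξ; exact hξ
      have hg2 : ‖g ξ t‖^2 ≤ Cg^2 * Real.exp (-(2*η)*t) := by
        have hb := hhigh t ht ξ hξ'
        have h0 : (0:ℝ) ≤ ‖g ξ t‖ := norm_nonneg _
        have hsq := mul_le_mul hb hb h0 (by positivity)
        calc ‖g ξ t‖^2 = ‖g ξ t‖ * ‖g ξ t‖ := sq (‖g ξ t‖)
          _ ≤ (Cg * Real.exp (-η*t)) * (Cg * Real.exp (-η*t)) := hsq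
          _ = Cg^2 * Real.exp (-(2*η)*t) := by
              rw [show (Cg * Real.exp (-η*t)) * (Cg * Real.exp (-η*t))
                  = Cg^2 * (Real.exp (-η*t) * Real.exp (-η*t)) by ring, ← Real.exp_add]
              congr 1
              ring
      have hh₁0 : h₁ ξ = 0 := by rw [hh₁def]; exact Set.indicator_of_notMem hξ _
      have hmain : ‖ξ‖^(2*k) * ‖g ξ t‖^2 * ‖VectorFourier.fourierIntegral Real.fourierChar volume (innerₗ (EuclideanSpace ℝ (Fin 3))) f ξ‖^2 ≤ h₂ ξ := by
        rw [hh₂def]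
        have h9 := mul_le_mul_of_nonneg_right (mul_le_mul_of_nonneg_left hg2
          (by positivity : (0:ℝ) ≤ ‖ξ‖^(2*k)))
          (by positivity : (0:ℝ) ≤ ‖VectorFourier.fourierIntegral Real.fourierChar volume (innerₗ (EuclideanSpace ℝ (Fin 3))) f ξ‖^2)
        calc ‖ξ‖^(2*k) * ‖g ξ t‖^2 * ‖VectorFourier.fourierIntegral Real.fourierChar volume (innerₗ (EuclideanSpace ℝ (Fin 3))) f ξ‖^2
            ≤ ‖ξ‖^(2*k) * (Cg^2 * Real.exp (-(2*η)*t)) * ‖VectorFourier.fourierIntegral Real.fourierChar volume (innerₗ (EuclideanSpace ℝ (Fin 3))) f ξ‖^2 := h9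
          _ = (Cg^2 * Real.exp (-(2*η)*t)) * (‖ξ‖^(2*k) * ‖VectorFourier.fourierIntegral Real.fourierChar volume (innerₗ (EuclideanSpace ℝ (Fin 3))) f ξ‖^2) := by
              ring
      linarith
  set J : ℝ := ∫ ξ : E3, ‖ξ‖^(2*k) * ‖g ξ t‖^2 * ‖VectorFourier.fourierIntegral Real.fourierChar volume (innerₗ (EuclideanSpace ℝ (Fin 3))) f ξ‖^2 with hJdef
  have hJnn : 0 ≤ J := integral_nonneg fun ξ => by positivity
  have hJ1 : J ≤ (∫ ξ : E3, h₁ ξ) + ∫ ξ : E3, h₂ ξ := by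
    have := integral_mono_of_nonneg
      (Filter.Eventually.of_forall (fun ξ : E3 => by positivity :
        ∀ ξ : E3, 0 ≤ ‖ξ‖^(2*k) * ‖g ξ t‖^2 * ‖VectorFourier.fourierIntegral Real.fourierChar volume (innerₗ (EuclideanSpace ℝ (Fin 3))) f ξ‖^2))
      (hint1.add hint2) (Filter.Eventually.of_forall hpoint)
    rw [hJdef]
    calc (∫ ξ : E3, ‖ξ‖^(2*k) * ‖g ξ t‖^2 * ‖VectorFourier.fourierIntegral Real.fourierChar volume (innerₗ (EuclideanSpace ℝ (Fin 3))) f ξ‖^2)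
        ≤ ∫ ξ : E3, (h₁ ξ + h₂ ξ) := this
      _ = (∫ ξ : E3, h₁ ξ) + ∫ ξ : E3, h₂ ξ := integral_add hint1 hint2
  have hInt1 : (∫ ξ : E3, h₁ ξ) ≤ Cg^2 * M^2 * (Kl * (1+t)^e) := by
    rw [hh₁def, integral_indicator measurableSet_ball, integral_const_mul]
    exact mul_le_mul_of_nonneg_left (hKl t ht) (by positivity)
  have hInt2 : (∫ ξ : E3, h₂ ξ) ≤ Cg^2 * (Kh * (1+t)^e) * N := by
    simp only [hh₂def]
    rw [integral_const_mul, ← hNdef]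
    have h10 : Cg^2 * Real.exp (-(2*η)*t) ≤ Cg^2 * (Kh * (1+t)^e) :=
      mul_le_mul_of_nonneg_left (hKh t ht) (by positivity)
    exact mul_le_mul_of_nonneg_right h10 hNnn
  have hJfin : J ≤ (Cg^2 * (Kl*M^2 + Kh*N)) * (1+t)^e := by
    calc J ≤ (∫ ξ : E3, h₁ ξ) + ∫ ξ : E3, h₂ ξ := hJ1
      _ ≤ Cg^2 * M^2 * (Kl * (1+t)^e) + Cg^2 * (Kh * (1+t)^e) * N :=
          add_le_add hInt1 hInt2
      _ = (Cg^2 * (Kl*M^2 + Kh*N)) * (1+t)^e := by ring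
  have hA : (0:ℝ) ≤ Cg^2 * (Kl*M^2 + Kh*N) := by positivity
  have hrw : ((Cg^2 * (Kl*M^2 + Kh*N)) * (1+t)^e) ^ ((1:ℝ)/2)
      = (Cg^2 * (Kl*M^2 + Kh*N)) ^ ((1:ℝ)/2) * (1+t) ^ (-(3:ℝ)/4 - (k:ℝ)/2) := by
    rw [Real.mul_rpow hA (Real.rpow_nonneg h1t.le e)]
    congr 1
    rw [← Real.rpow_mul h1t.le]
    congr 1
    rw [he_def]; ring
  have h3 : (Cg^2 * (Kl*M^2 + Kh*N)) ^ ((1:ℝ)/2)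
      ≤ Cg * (Real.sqrt Kl * M + Real.sqrt Kh * Real.sqrt N) := by
    rw [← Real.sqrt_eq_rpow]
    have e1 : Cg^2 * (Kl*M^2 + Kh*N) = (Cg^2*(Kl*M^2)) + Cg^2*(Kh*N) := by ring
    rw [e1]
    calc Real.sqrt ((Cg^2*(Kl*M^2)) + Cg^2*(Kh*N))
        ≤ Real.sqrt (Cg^2*(Kl*M^2)) + Real.sqrt (Cg^2*(Kh*N)) :=
          aux_sqrt_add_le (by positivity) (by positivity)
      _ = Cg * (Real.sqrt Kl * M) + Cg * (Real.sqrt Kh * Real.sqrt N) := by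
          rw [Real.sqrt_mul (by positivity) (Kl*M^2), Real.sqrt_mul (by positivity) (Kh*N),
            Real.sqrt_mul hKlnn, Real.sqrt_mul hKhnn,
            Real.sqrt_sq hCg.le, Real.sqrt_sq hMnn]
      _ = Cg * (Real.sqrt Kl * M + Real.sqrt Kh * Real.sqrt N) := by ring
  have h4 : Real.sqrt Kl * M + Real.sqrt Kh * Real.sqrt N
      ≤ (Real.sqrt Kl + Real.sqrt Kh + 1) * (M + Real.sqrt N) := by
    have s1 := Real.sqrt_nonneg Kl
    have s2 := Real.sqrt_nonneg Kh
    have s3 := Real.sqrt_nonneg N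
    nlinarith
  have hP : (0:ℝ) ≤ (1+t) ^ (-(3:ℝ)/4 - (k:ℝ)/2) := Real.rpow_nonneg h1t.le _
  have hNs : N ^ ((1:ℝ)/2) = Real.sqrt N := (Real.sqrt_eq_rpow N).symm
  calc J ^ ((1:ℝ)/2)
      ≤ ((Cg^2 * (Kl*M^2 + Kh*N)) * (1+t)^e) ^ ((1:ℝ)/2) :=
        Real.rpow_le_rpow hJnn hJfin (by norm_num)
    _ = (Cg^2 * (Kl*M^2 + Kh*N)) ^ ((1:ℝ)/2) * (1+t) ^ (-(3:ℝ)/4 - (k:ℝ)/2) := hrw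
    _ ≤ (Cg * (Real.sqrt Kl * M + Real.sqrt Kh * Real.sqrt N)) *
          (1+t) ^ (-(3:ℝ)/4 - (k:ℝ)/2) := mul_le_mul_of_nonneg_right h3 hP
    _ ≤ (Cg * ((Real.sqrt Kl + Real.sqrt Kh + 1) * (M + Real.sqrt N))) *
          (1+t) ^ (-(3:ℝ)/4 - (k:ℝ)/2) :=
        mul_le_mul_of_nonneg_right (mul_le_mul_of_nonneg_left h4 hCg.le) hP
    _ = Cg * (Real.sqrt Kl + Real.sqrt Kh + 1) * (1+t) ^ (-(3:ℝ)/4 - (k:ℝ)/2) *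
          (M + N ^ ((1:ℝ)/2)) := by rw [hNs]; ring
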